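/- For any belief β (a density matrix on S⊗R₁) and any density matrix σ on a further system R₂, the beliefs β (on S with reference system R₁) and β⊗σ (on S with reference system R₁⊗R₂) are equivalent. -/

import Mathlib

open Matrix
open scoped Kronecker ComplexOrder


open Classical in
/-- The positive semidefinite square root of a matrix (zero if not PSD). -/
noncomputable def msqrt {n : Type*} [Fintype n] [DecidableEq n] (A : Matrix n n ℂ) :
    Matrix n n ℂ :=
  if h : A.PosSemidef then
    h.1.eigenvectorUnitary.1 * diagonal ((↑) ∘ (√·) ∘ h.1.eigenvalues) *
      (star h.1.eigenvectorUnitary : Matrix n n ℂ)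
  else 0

/-- `A^{-1/2}`: the (nonsingular) inverse of the PSD square root. -/
noncomputable def invsqrt {n : Type*} [Fintype n] [DecidableEq n] (A : Matrix n n ℂ) :
    Matrix n n ℂ :=
  (msqrt A)⁻¹

/-- Partial trace over the second factor `R`. -/
noncomputable def ptraceR {S R : Type*} [Fintype R] (M : Matrix (S × R) (S × R) ℂ) : Matrix S S ℂ :=
  Matrix.of fun s s' => ∑ r, M (s, r) (s', r)

/-- A density matrix: positive semidefinite with unit trace. -/
def IsDensity {n : Type*} [Fintype n] (A : Matrix n n ℂ) : Prop :=
  A.PosSemidef ∧ A.trace = 1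

/-- The Choi matrix of a linear map between matrix algebras. -/
def choi {S T : Type*} [Fintype S] [DecidableEq S]
    (E : Matrix S S ℂ →ₗ[ℂ] Matrix T T ℂ) : Matrix (S × T) (S × T) ℂ :=
  Matrix.of fun p q => E (Matrix.single p.1 q.1 1) p.2 q.2

/-- Completely positive trace-preserving map. -/
def IsCPTP {S T : Type*} [Fintype S] [DecidableEq S] [Fintype T]
    (E : Matrix S S ℂ →ₗ[ℂ] Matrix T T ℂ) : Prop :=
  (∀ X, (E X).trace = X.trace) ∧ (choi E).PosSemidef

/-- The Hilbert-Schmidt adjoint `E†`, satisfying `Tr[E(X)† Y] = Tr[X† E†(Y)]`. -/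
noncomputable def adjMap {S T : Type*} [Fintype S] [DecidableEq S] [Fintype T]
    (E : Matrix S S ℂ →ₗ[ℂ] Matrix T T ℂ) (Y : Matrix T T ℂ) : Matrix S S ℂ :=
  Matrix.of fun i j => ((E (Matrix.single i j 1))ᴴ * Y).trace

/-- The original Petz map `R^{E,βS}(σ) = √βS E†(E(βS)^{-1/2} σ E(βS)^{-1/2}) √βS`. -/
noncomputable def petz {S T : Type*} [Fintype S] [DecidableEq S] [Fintype T] [DecidableEq T]
    (E : Matrix S S ℂ →ₗ[ℂ] Matrix T T ℂ) (βS : Matrix S S ℂ) (σ : Matrix T T ℂ) :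
    Matrix S S ℂ :=
  msqrt βS * adjMap E (invsqrt (E βS) * σ * invsqrt (E βS)) * msqrt βS

/-- The prior-extended Petz map `R^{E⊗Tr,β}`. -/
noncomputable def petzExt {S R T : Type*} [Fintype S] [DecidableEq S]
    [Fintype R] [DecidableEq R] [Fintype T] [DecidableEq T]
    (E : Matrix S S ℂ →ₗ[ℂ] Matrix T T ℂ) (β : Matrix (S × R) (S × R) ℂ)
    (σ : Matrix T T ℂ) : Matrix (S × R) (S × R) ℂ :=
  msqrt β *
    (adjMap E (invsqrt (E (ptraceR β)) * σ * invsqrt (E (ptraceR β))) ⊗ₖ (1 : Matrix R R ℂ)) *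
    msqrt β

/-- The retrodiction map `R_ext^{E,β} = Tr_R ∘ R^{E⊗Tr,β}`. -/
noncomputable def retroExt {S R T : Type*} [Fintype S] [DecidableEq S]
    [Fintype R] [DecidableEq R] [Fintype T] [DecidableEq T]
    (E : Matrix S S ℂ →ₗ[ℂ] Matrix T T ℂ) (β : Matrix (S × R) (S × R) ℂ)
    (σ : Matrix T T ℂ) : Matrix S S ℂ :=
  ptraceR (petzExt E β σ)

/-- Two beliefs are equivalent if they induce the same retrodiction map for all channels. -/
def EquivBeliefs {S R₁ R₂ : Type*} [Fintype S] [DecidableEq S]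
    [Fintype R₁] [DecidableEq R₁] [Fintype R₂] [DecidableEq R₂]
    (β : Matrix (S × R₁) (S × R₁) ℂ) (γ : Matrix (S × R₂) (S × R₂) ℂ) : Prop :=
  ∀ (T : Type) (_ : Fintype T) (_ : DecidableEq T)
    (E : Matrix S S ℂ →ₗ[ℂ] Matrix T T ℂ),
    IsCPTP E → (E (ptraceR β)).PosDef → (E (ptraceR γ)).PosDef →
    ∀ σ : Matrix T T ℂ, retroExt E β σ = retroExt E γ σ



section auxlemmas
open Classical

variable {n m : Type*} [Fintype n] [DecidableEq n] [Fintype m] [DecidableEq m]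

open scoped MatrixOrder in
/-- The PSD square root, in the form used by `msqrt`. -/
noncomputable def Matrix.PosSemidef.sqrt {p : Type*} [Fintype p] [DecidableEq p]
    {A : Matrix p p ℂ} (hA : A.PosSemidef) : Matrix p p ℂ :=
  hA.1.eigenvectorUnitary.1 * diagonal ((↑) ∘ (√·) ∘ hA.1.eigenvalues) *
    (star hA.1.eigenvectorUnitary : Matrix p p ℂ)

open scoped MatrixOrder in
lemma Matrix.PosSemidef.sqrt_eq_cfcSqrt {p : Type*} [Fintype p] [DecidableEq p]
    {A : Matrix p p ℂ} (hA : A.PosSemidef) : hA.sqrt = CFC.sqrt A := by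
  rw [CFC.sqrt_eq_real_sqrt A (Matrix.nonneg_iff_posSemidef.mpr hA), cfcₙ_eq_cfc,
    hA.1.cfc_eq]
  simp only [Matrix.IsHermitian.cfc, Unitary.conjStarAlgAut_apply]
  rfl

open scoped MatrixOrder in
lemma Matrix.PosSemidef.posSemidef_sqrt {p : Type*} [Fintype p] [DecidableEq p]
    {A : Matrix p p ℂ} (hA : A.PosSemidef) : hA.sqrt.PosSemidef := by
  rw [hA.sqrt_eq_cfcSqrt, ← Matrix.nonneg_iff_posSemidef]
  exact CFC.sqrt_nonneg A

open scoped MatrixOrder in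
lemma Matrix.PosSemidef.sqrt_mul_self {p : Type*} [Fintype p] [DecidableEq p]
    {A : Matrix p p ℂ} (hA : A.PosSemidef) : hA.sqrt * hA.sqrt = A := by
  rw [hA.sqrt_eq_cfcSqrt]
  exact CFC.sqrt_mul_sqrt_self A (Matrix.nonneg_iff_posSemidef.mpr hA)

open scoped MatrixOrder in
lemma Matrix.PosSemidef.eq_sqrt_of_sq_eq {p : Type*} [Fintype p] [DecidableEq p]
    {B : Matrix p p ℂ} (hB : B.PosSemidef) {A : Matrix p p ℂ} (hA : A.PosSemidef)
    (h : B ^ 2 = A) : B = hA.sqrt := by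
  rw [hA.sqrt_eq_cfcSqrt]
  exact (CFC.sqrt_unique (by rw [← pow_two, h]) (Matrix.nonneg_iff_posSemidef.mpr hB)).symm

omit [DecidableEq n] [DecidableEq m] in
lemma conjTranspose_kron (A : Matrix n n ℂ) (B : Matrix m m ℂ) :
    (A ⊗ₖ B)ᴴ = Aᴴ ⊗ₖ Bᴴ := by
  ext ⟨i, j⟩ ⟨k, l⟩
  simp [Matrix.conjTranspose_apply, Matrix.kroneckerMap_apply, star_mul']

omit [DecidableEq n] [DecidableEq m] in
lemma posSemidef_kron {A : Matrix n n ℂ} {B : Matrix m m ℂ}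
    (hA : A.PosSemidef) (hB : B.PosSemidef) : (A ⊗ₖ B).PosSemidef := by
  have h : A ⊗ₖ B = (hA.sqrt ⊗ₖ hB.sqrt)ᴴ * (hA.sqrt ⊗ₖ hB.sqrt) := by
    rw [conjTranspose_kron, hA.posSemidef_sqrt.1, hB.posSemidef_sqrt.1,
      ← Matrix.mul_kronecker_mul, hA.sqrt_mul_self, hB.sqrt_mul_self]
  rw [h]
  exact Matrix.posSemidef_conjTranspose_mul_self _

omit [DecidableEq n] in
lemma reindex_mul' {p : Type*} [Fintype p] (e : p ≃ n) (A B : Matrix p p ℂ) :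
    (Matrix.reindex e e A) * (Matrix.reindex e e B) = Matrix.reindex e e (A * B) := by
  simp [Matrix.reindex_apply, Matrix.submatrix_mul_equiv]

lemma msqrt_eq {A : Matrix n n ℂ} (hA : A.PosSemidef) : msqrt A = hA.sqrt := by
  rw [msqrt, dif_pos hA]; rfl

lemma msqrt_mul_self {A : Matrix n n ℂ} (hA : A.PosSemidef) : msqrt A * msqrt A = A := by
  rw [msqrt_eq hA, hA.sqrt_mul_self]

lemma msqrt_kron {A : Matrix n n ℂ} {B : Matrix m m ℂ}
    (hA : A.PosSemidef) (hB : B.PosSemidef) :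
    msqrt (A ⊗ₖ B) = msqrt A ⊗ₖ msqrt B := by
  have hk := posSemidef_kron hA hB
  have hsq : (hA.sqrt ⊗ₖ hB.sqrt) ^ 2 = A ⊗ₖ B := by
    rw [pow_two, ← Matrix.mul_kronecker_mul, hA.sqrt_mul_self, hB.sqrt_mul_self]
  have h := (posSemidef_kron hA.posSemidef_sqrt hB.posSemidef_sqrt).eq_sqrt_of_sq_eq hk hsq
  rw [msqrt_eq hk, ← h, msqrt_eq hA, msqrt_eq hB]

lemma msqrt_reindex {p : Type*} [Fintype p] [DecidableEq p] (e : p ≃ n)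
    {M : Matrix p p ℂ} (hM : M.PosSemidef) :
    msqrt (Matrix.reindex e e M) = Matrix.reindex e e (msqrt M) := by
  have hM' : (Matrix.reindex e e M).PosSemidef := hM.submatrix e.symm
  have h1 : (Matrix.reindex e e (msqrt M)).PosSemidef := by
    rw [msqrt_eq hM]; exact hM.posSemidef_sqrt.submatrix e.symm
  have hsq : (Matrix.reindex e e (msqrt M)) ^ 2 = Matrix.reindex e e M := by
    rw [pow_two, reindex_mul', msqrt_mul_self hM]
  rw [msqrt_eq hM']
  exact (h1.eq_sqrt_of_sq_eq hM' hsq).symm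

lemma ptraceR_reindex_kron {S R₁ R₂ : Type*} [Fintype S] [Fintype R₁] [Fintype R₂]
    (M : Matrix (S × R₁) (S × R₁) ℂ) (N : Matrix R₂ R₂ ℂ) :
    ptraceR (Matrix.reindex (Equiv.prodAssoc S R₁ R₂) (Equiv.prodAssoc S R₁ R₂) (M ⊗ₖ N))
      = N.trace • ptraceR M := by
  ext s s'
  simp only [ptraceR, Matrix.of_apply, Matrix.reindex_apply, Matrix.submatrix_apply,
    Equiv.prodAssoc_symm_apply, Matrix.kroneckerMap_apply, Matrix.smul_apply,
    Matrix.trace, Matrix.diag_apply, smul_eq_mul]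
  rw [Fintype.sum_prod_type, Finset.sum_mul]
  simp_rw [Finset.mul_sum]
  rw [Finset.sum_comm]
  exact Finset.sum_congr rfl fun _ _ => Finset.sum_congr rfl fun _ _ => mul_comm _ _

end auxlemmas

/-- Adjoining an uncorrelated additional system `R₂` in state `σ`
yields an equivalent belief. -/
theorem tensor_uncorrelated_equiv
    {S R₁ R₂ : Type*} [Fintype S] [DecidableEq S]
    [Fintype R₁] [DecidableEq R₁] [Fintype R₂] [DecidableEq R₂]
    (β : Matrix (S × R₁) (S × R₁) ℂ) (σ : Matrix R₂ R₂ ℂ)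
    (hβ : IsDensity β) (hσ : IsDensity σ) :
    EquivBeliefs β
      ((Matrix.reindex (Equiv.prodAssoc S R₁ R₂) (Equiv.prodAssoc S R₁ R₂)) (β ⊗ₖ σ)) := by
  intro T _ _ E hE hβpos hγpos σ'
  have hmarg : ptraceR ((Matrix.reindex (Equiv.prodAssoc S R₁ R₂) (Equiv.prodAssoc S R₁ R₂))
      (β ⊗ₖ σ)) = ptraceR β := by
    rw [ptraceR_reindex_kron, hσ.2, one_smul]
  unfold retroExt petzExt
  rw [hmarg]
  set A := adjMap E (invsqrt (E (ptraceR β)) * σ' * invsqrt (E (ptraceR β))) with hA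
  have hmsq : msqrt ((Matrix.reindex (Equiv.prodAssoc S R₁ R₂) (Equiv.prodAssoc S R₁ R₂))
      (β ⊗ₖ σ)) = (Matrix.reindex (Equiv.prodAssoc S R₁ R₂) (Equiv.prodAssoc S R₁ R₂))
      (msqrt β ⊗ₖ msqrt σ) := by
    rw [msqrt_reindex _ (posSemidef_kron hβ.1 hσ.1), msqrt_kron hβ.1 hσ.1]
  have hone : (A ⊗ₖ (1 : Matrix (R₁ × R₂) (R₁ × R₂) ℂ))
      = (Matrix.reindex (Equiv.prodAssoc S R₁ R₂) (Equiv.prodAssoc S R₁ R₂))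
        ((A ⊗ₖ (1 : Matrix R₁ R₁ ℂ)) ⊗ₖ (1 : Matrix R₂ R₂ ℂ)) := by
    rw [Matrix.kronecker_assoc, Matrix.one_kronecker_one]
  have key : (msqrt β ⊗ₖ msqrt σ) * ((A ⊗ₖ (1 : Matrix R₁ R₁ ℂ)) ⊗ₖ (1 : Matrix R₂ R₂ ℂ))
      * (msqrt β ⊗ₖ msqrt σ)
      = (msqrt β * (A ⊗ₖ (1 : Matrix R₁ R₁ ℂ)) * msqrt β) ⊗ₖ σ := by
    rw [← Matrix.mul_kronecker_mul, ← Matrix.mul_kronecker_mul, Matrix.mul_one,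
      msqrt_mul_self hσ.1]
  rw [hmsq, hone, reindex_mul', reindex_mul', key, ptraceR_reindex_kron, hσ.2, one_smul]
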